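/- Let f be a bounded continuous function on the open unit disc. Then ‖f‖_BWMO = 0 if and only if f is constant. -/

import Mathlib

open MeasureTheory Set

noncomputable section

/-- The normalized area measure on the plane: planar Lebesgue measure divided by `π`. -/
def dA : Measure ℂ := (ENNReal.ofReal Real.pi)⁻¹ • volume

/-- The open unit disc `𝔻`. -/
def unitDisc : Set ℂ := {z : ℂ | ‖z‖ < 1}

/-- The argument `θ` of `z`, normalized to lie in `[0, 2π)`. -/
def theta (z : ℂ) : ℝ := toIcoMod Real.two_pi_pos 0 (Complex.arg z)

/-- The angle of `ζ`, normalized to lie in `[theta z, theta z + 2π)`;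
for `ζ ∈ B(z)` this is the angle `θ̃ ∈ [θ, θ + π(1-r)]` of the paper's convention. -/
def angFrom (z ζ : ℂ) : ℝ := toIcoMod Real.two_pi_pos (theta z) (Complex.arg ζ)

/-- The polar rectangle `{ρ e^{iφ} : r₁ ≤ ρ ≤ r₂, φ₁ ≤ φ ≤ φ₂}`. -/
def polarRect (r₁ r₂ φ₁ φ₂ : ℝ) : Set ℂ :=
  {w : ℂ | ∃ ρ φ : ℝ, r₁ ≤ ρ ∧ ρ ≤ r₂ ∧ φ₁ ≤ φ ∧ φ ≤ φ₂ ∧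
    w = (ρ : ℂ) * Complex.exp ((φ : ℂ) * Complex.I)}

/-- The set `B(z)` for `z = r e^{iθ} ∈ 𝔻`. -/
def Bz (z : ℂ) : Set ℂ :=
  polarRect ‖z‖ (1 - (1 - ‖z‖) / 2) (theta z) (theta z + Real.pi * (1 - ‖z‖))

/-- The set `B(z, ζ)` for `ζ ∈ B(z)`. -/
def Bzz (z ζ : ℂ) : Set ℂ := polarRect ‖z‖ ‖ζ‖ (theta z) (angFrom z ζ)

/-- The set `B(ζ₁, ζ₂)` for points `ζ₁ ≾ ζ₂` of `B(z)`. -/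
def Bsub (z ζ₁ ζ₂ : ℂ) : Set ℂ := polarRect ‖ζ₁‖ ‖ζ₂‖ (angFrom z ζ₁) (angFrom z ζ₂)

/-- The relation `ζ₁ ≾ ζ₂` for points of `B(z)`: `ρ₁ ≤ ρ₂` and `φ₁ ≤ φ₂`. -/
def precSim (z ζ₁ ζ₂ : ℂ) : Prop := ‖ζ₁‖ ≤ ‖ζ₂‖ ∧ angFrom z ζ₁ ≤ angFrom z ζ₂

/-- The average `f̂_K = (1/|K|) ∫_K f dA` of `f` over a set `K`. -/
def avgOn (f : ℂ → ℂ) (K : Set ℂ) : ℂ := ((dA K).toReal)⁻¹ • ∫ w in K, f w ∂dA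

/-- The average function `f̂(z) = f̂_{B(z)}`. -/
def avg (f : ℂ → ℂ) (z : ℂ) : ℂ := avgOn f (Bz z)

/-- The quantity `(1/|B(z)|) |∫_{B(z,ζ)} (f(ξ) - f̂(z)) dA(ξ)|`. -/
def wQuot (f : ℂ → ℂ) (z ζ : ℂ) : ℝ :=
  ((dA (Bz z)).toReal)⁻¹ * ‖∫ ξ in Bzz z ζ, (f ξ - avg f z) ∂dA‖

/-- The BWMO condition: `‖f‖_BWMO < ∞`. -/
def IsBWMO (f : ℂ → ℂ) : Prop := ∃ C : ℝ, ∀ z ∈ unitDisc, ∀ ζ ∈ Bz z, wQuot f z ζ ≤ C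

/-- The BWMO seminorm `‖f‖_BWMO`. -/
def bwmoNorm (f : ℂ → ℂ) : ℝ :=
  sSup {c : ℝ | ∃ z ∈ unitDisc, ∃ ζ ∈ Bz z, c = wQuot f z ζ}

/-- The VWMO condition:
`(1/|B(z)|) sup_{ζ ∈ B(z)} |∫_{B(z,ζ)} (f - f̂(z)) dA| → 0` as `|z| → 1`. -/
def IsVWMO (f : ℂ → ℂ) : Prop :=
  ∀ ε > (0:ℝ), ∃ r₀ < (1:ℝ), ∀ z ∈ unitDisc, r₀ ≤ ‖z‖ → ∀ ζ ∈ Bz z, wQuot f z ζ ≤ ε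

/-- The Bergman-metric disc `D(z,1)` of radius `1` centered at `z`. -/
def Dball (z : ℂ) : Set ℂ :=
  {w : ℂ | ‖w‖ < 1 ∧ ‖(z - w) / (1 - (starRingEnd ℂ) w * z)‖ < Real.tanh 1}

/-- The hyperbolic average `f̂₁(z) = (1/|D(z,1)|) ∫_{D(z,1)} f dA` of a real-valued `f`. -/
def avg1 (f : ℂ → ℝ) (z : ℂ) : ℝ := ((dA (Dball z)).toReal)⁻¹ * ∫ w in Dball z, f w ∂dA

/-- The mean oscillation `(1/|D(z,1)|) ∫_{D(z,1)} |f - f̂₁(z)| dA` of a real-valued `f`. -/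
def meanOsc1 (f : ℂ → ℝ) (z : ℂ) : ℝ :=
  ((dA (Dball z)).toReal)⁻¹ * ∫ ξ in Dball z, |f ξ - avg1 f z| ∂dA

/-- The Berezin transform `f̃(z) = ∫_𝔻 f(w) |k_z(w)|² dA(w)`,
where `k_z(w) = (1-|z|²)/(1-w z̄)²`. -/
def berezin (f : ℂ → ℂ) (z : ℂ) : ℂ :=
  ∫ w in unitDisc, f w * ((((1 - ‖z‖ ^ 2) ^ 2 / ‖1 - w * (starRingEnd ℂ) z‖ ^ 4 : ℝ)) : ℂ) ∂dA

/-- The example symbol of Section 4: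
`f(r e^{iθ}) = (1/(r (1-r)^{b-β})) sin(1/(1-r)^b)` for `r ≥ 1/2`, and `1` for `r < 1/2`. -/
def fEx (b β : ℝ) (z : ℂ) : ℝ :=
  if ‖z‖ < 1 / 2 then 1
  else (1 / (‖z‖ * (1 - ‖z‖) ^ (b - β))) * Real.sin (1 / (1 - ‖z‖) ^ b)

end

section Helpers
open Complex

lemma polarRect_eq_image (r₁ r₂ φ₁ φ₂ : ℝ) :
    polarRect r₁ r₂ φ₁ φ₂ =
      (fun p : ℝ × ℝ => (p.1 : ℂ) * Complex.exp ((p.2 : ℂ) * Complex.I)) ''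
        (Set.Icc r₁ r₂ ×ˢ Set.Icc φ₁ φ₂) := by
  ext w
  simp only [polarRect, Set.mem_image, Set.mem_prod, Set.mem_Icc, Set.mem_setOf_eq, Prod.exists]
  constructor
  · rintro ⟨ρ, φ, h1, h2, h3, h4, rfl⟩; exact ⟨ρ, φ, ⟨⟨h1,h2⟩,⟨h3,h4⟩⟩, rfl⟩
  · rintro ⟨ρ, φ, ⟨⟨h1,h2⟩,⟨h3,h4⟩⟩, rfl⟩; exact ⟨ρ, φ, h1, h2, h3, h4, rfl⟩

lemma isCompact_polarRect (r₁ r₂ φ₁ φ₂ : ℝ) : IsCompact (polarRect r₁ r₂ φ₁ φ₂) := by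
  rw [polarRect_eq_image]
  exact ((isCompact_Icc.prod isCompact_Icc).image (by fun_prop))

lemma measurableSet_polarRect (r₁ r₂ φ₁ φ₂ : ℝ) : MeasurableSet (polarRect r₁ r₂ φ₁ φ₂) :=
  (isCompact_polarRect r₁ r₂ φ₁ φ₂).isClosed.measurableSet

lemma dA_apply (s : Set ℂ) : dA s = (ENNReal.ofReal Real.pi)⁻¹ * volume s := rfl

lemma dA_coef_ne_top : (ENNReal.ofReal Real.pi)⁻¹ ≠ ⊤ := by
  rw [Ne, ENNReal.inv_eq_top, ← Ne, ← pos_iff_ne_zero]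
  exact ENNReal.ofReal_pos.2 Real.pi_pos

lemma dA_coef_ne_zero : (ENNReal.ofReal Real.pi)⁻¹ ≠ 0 := by
  simp [ENNReal.inv_ne_zero]

lemma dA_ne_top {K : Set ℂ} (hK : IsCompact K) : dA K ≠ ⊤ := by
  rw [dA_apply]
  exact ENNReal.mul_ne_top dA_coef_ne_top hK.measure_lt_top.ne

lemma exp_I_periodic {a b : ℝ} (k : ℤ) (h : a = b + k * (2*Real.pi)) :
    Complex.exp ((a:ℂ)*Complex.I) = Complex.exp ((b:ℂ)*Complex.I) := by
  subst h
  push_cast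
  rw [add_mul, Complex.exp_add, mul_assoc, Complex.exp_int_mul_two_pi_mul_I, mul_one]

lemma arg_polar {ρ : ℝ} (hρ : 0 < ρ) (φ : ℝ) :
    ∃ k : ℤ, Complex.arg ((ρ:ℂ) * Complex.exp ((φ:ℂ)*Complex.I)) = φ + k * (2*Real.pi) := by
  rw [Complex.arg_real_mul _ hρ, Complex.arg_exp_mul_I]
  refine ⟨-(toIocDiv (mul_pos two_pos Real.pi_pos) (-Real.pi) φ), ?_⟩
  have := toIocMod_add_toIocDiv_zsmul (mul_pos two_pos Real.pi_pos) (-Real.pi) φ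
  push_cast
  linarith [this, zsmul_eq_mul (2*Real.pi) (toIocDiv (mul_pos two_pos Real.pi_pos) (-Real.pi) φ)]

lemma theta_rep (z : ℂ) : ∃ k : ℤ, theta z = Complex.arg z + k * (2*Real.pi) := by
  refine ⟨-(toIcoDiv Real.two_pi_pos 0 (Complex.arg z)), ?_⟩
  have := toIcoMod_add_toIcoDiv_zsmul Real.two_pi_pos 0 (Complex.arg z)
  unfold theta
  push_cast
  linarith [this, zsmul_eq_mul (2*Real.pi) (toIcoDiv Real.two_pi_pos 0 (Complex.arg z))]

lemma polar_theta (z : ℂ) : (‖z‖:ℂ) * Complex.exp ((theta z : ℂ) * Complex.I) = z := by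
  obtain ⟨k, hk⟩ := theta_rep z
  rw [exp_I_periodic k hk, Complex.norm_mul_exp_arg_mul_I]

lemma norm_exp_I (φ : ℝ) : ‖Complex.exp ((φ:ℂ) * Complex.I)‖ = 1 := by
  exact Complex.norm_exp_ofReal_mul_I φ

lemma norm_polar {ρ : ℝ} (h : 0 ≤ ρ) (φ : ℝ) :
    ‖(ρ:ℂ) * Complex.exp ((φ:ℂ)*Complex.I)‖ = ρ := by
  rw [norm_mul, norm_exp_I, mul_one, Complex.norm_real, Real.norm_of_nonneg h]

lemma angFrom_polar {ρ : ℝ} (hρ : 0 < ρ) {z : ℂ} {φ : ℝ}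
    (h1 : theta z ≤ φ) (h2 : φ < theta z + 2*Real.pi) :
    angFrom z ((ρ:ℂ) * Complex.exp ((φ:ℂ)*Complex.I)) = φ := by
  obtain ⟨k, hk⟩ := arg_polar hρ φ
  unfold angFrom
  rw [hk]
  have h3 : φ + (k:ℝ) * (2*Real.pi) = φ + k • (2*Real.pi) := by
    rw [zsmul_eq_mul]
  rw [h3, toIcoMod_add_zsmul, toIcoMod_eq_self]
  exact ⟨h1, h2⟩

end Helpers

section Helpers2
open Complex

lemma exists_ball_subset_polarRect {r₁ r₂ φ₁ φ₂ : ℝ} (h0 : 0 ≤ r₁) (h12 : r₁ < r₂)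
    (hφ : φ₁ < φ₂) : ∃ w δ, 0 < δ ∧ Metric.ball w δ ⊆ polarRect r₁ r₂ φ₁ φ₂ := by
  set ρm : ℝ := (r₁ + r₂)/2 with hρm
  set φm : ℝ := (φ₁ + φ₂)/2 with hφm
  have hρm0 : 0 < ρm := by rw [hρm]; linarith
  set β : ℝ := min ((φ₂ - φ₁)/2) (Real.pi/2) with hβ
  have hβ0 : 0 < β := lt_min (by linarith) (by positivity)
  have hβ2 : β ≤ Real.pi/2 := min_le_right _ _
  have hsβ0 : 0 < Real.sin β :=
    Real.sin_pos_of_pos_of_lt_pi hβ0 (lt_of_le_of_lt hβ2 (by linarith [Real.pi_pos]))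
  have hsβ1 : Real.sin β ≤ 1 := Real.sin_le_one β
  set δ : ℝ := min ((r₂ - r₁)/2) (ρm/2 * Real.sin β) with hδ
  have hδ0 : 0 < δ := lt_min (by linarith) (by positivity)
  have hδ1 : δ ≤ (r₂ - r₁)/2 := min_le_left _ _
  have hδ2 : δ ≤ ρm/2 * Real.sin β := min_le_right _ _
  have hδ3 : δ ≤ ρm/2 := hδ2.trans (by nlinarith)
  refine ⟨(ρm : ℂ) * Complex.exp ((φm : ℂ) * Complex.I), δ, hδ0, ?_⟩
  intro w hw
  rw [Metric.mem_ball, dist_eq_norm] at hw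
  set e : ℂ := Complex.exp (-((φm : ℂ) * Complex.I)) with he
  have hee : Complex.exp ((φm : ℂ) * Complex.I) * e = 1 := by
    rw [he, ← Complex.exp_add, add_neg_cancel, Complex.exp_zero]
  have hne : ‖e‖ = 1 := by
    have : e = Complex.exp (((-φm : ℝ) : ℂ) * Complex.I) := by rw [he]; push_cast; ring_nf
    rw [this, norm_exp_I]
  set u : ℂ := w * e with hu
  have hsub : u - (ρm : ℂ) = (w - (ρm : ℂ) * Complex.exp ((φm : ℂ) * Complex.I)) * e := by
    rw [hu, sub_mul, mul_assoc, hee, mul_one]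
  have hud : ‖u - (ρm : ℂ)‖ < δ := by rw [hsub, norm_mul, hne, mul_one]; exact hw
  have hnu : |‖u‖ - ρm| < δ := by
    have := abs_norm_sub_norm_le u ((ρm : ℂ))
    rw [Complex.norm_real, Real.norm_of_nonneg hρm0.le] at this
    exact lt_of_le_of_lt this hud
  rw [abs_lt] at hnu
  have hre : ρm - δ ≤ u.re := by
    have h1 : |(u - (ρm : ℂ)).re| ≤ ‖u - (ρm : ℂ)‖ := Complex.abs_re_le_norm _
    rw [Complex.sub_re, Complex.ofReal_re] at h1
    have := abs_le.1 h1
    linarith [this.1, hud]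
  have hre0 : 0 < u.re := by linarith
  have him : |u.im| ≤ δ := by
    have h1 : |(u - (ρm : ℂ)).im| ≤ ‖u - (ρm : ℂ)‖ := Complex.abs_im_le_norm _
    rw [Complex.sub_im, Complex.ofReal_im, sub_zero] at h1
    linarith [hud]
  have hu0 : u ≠ 0 := by
    intro h; rw [h] at hre0; simp at hre0
  have hargu : |Complex.arg u| ≤ Real.pi/2 := Complex.abs_arg_le_pi_div_two_iff.2 hre0.le
  have hnu2 : ρm/2 ≤ ‖u‖ := by linarith
  have hsin : |Real.sin (Complex.arg u)| ≤ Real.sin β := by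
    rw [Complex.sin_arg, abs_div, _root_.abs_of_nonneg (norm_nonneg u)]
    rw [div_le_iff₀ (lt_of_lt_of_le (by linarith) hnu2)]
    calc |u.im| ≤ δ := him
    _ ≤ ρm/2 * Real.sin β := hδ2
    _ ≤ ‖u‖ * Real.sin β := by nlinarith
    _ = Real.sin β * ‖u‖ := mul_comm _ _
  have hsin2 : Real.sin |Complex.arg u| ≤ Real.sin β := by
    rcases le_or_gt 0 (Complex.arg u) with h | h
    · rwa [_root_.abs_of_nonneg h, ← _root_.abs_of_nonneg (Real.sin_nonneg_of_nonneg_of_le_pi h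
        (by linarith [(abs_le.1 hargu).2, Real.pi_pos]))]
    · rw [_root_.abs_of_neg h, Real.sin_neg]
      have : Real.sin (Complex.arg u) ≤ 0 := by
        apply Real.sin_nonpos_of_nonpos_of_neg_pi_le h.le
        have := abs_le.1 hargu
        linarith [this.1, Real.pi_pos]
      rwa [← _root_.abs_of_nonpos this]
  have hargβ : |Complex.arg u| ≤ β := by
    by_contra hcon
    push_neg at hcon
    have := Real.strictMonoOn_sin
      (Set.mem_Icc.2 ⟨by linarith [Real.pi_pos], hβ2⟩)
      (Set.mem_Icc.2 ⟨by linarith [abs_nonneg (Complex.arg u), Real.pi_pos], hargu⟩) hcon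
    linarith
  have hwu : ‖w‖ = ‖u‖ := by rw [hu, norm_mul, hne, mul_one]
  have habs := abs_le.1 hargβ
  have hβle : β ≤ (φ₂ - φ₁)/2 := min_le_left _ _
  refine ⟨‖w‖, φm + Complex.arg u, ?_, ?_, ?_, ?_, ?_⟩
  · rw [hwu]; rw [hρm] at hnu; linarith [hnu.1, hδ1]
  · rw [hwu]; rw [hρm] at hnu; linarith [hnu.2, hδ1]
  · rw [hφm]; linarith [habs.1]
  · rw [hφm]; linarith [habs.2]
  · have hw_eq : w = u * Complex.exp ((φm : ℂ) * Complex.I) := by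
      rw [hu, mul_assoc, mul_comm e (Complex.exp ((φm : ℂ) * Complex.I)), hee, mul_one]
    have hupolar : ((‖u‖ : ℝ) : ℂ) * Complex.exp ((Complex.arg u : ℂ) * Complex.I) = u :=
      Complex.norm_mul_exp_arg_mul_I u
    have hsplit : ((φm + Complex.arg u : ℝ) : ℂ) * Complex.I
        = (Complex.arg u : ℂ) * Complex.I + (φm : ℂ) * Complex.I := by push_cast; ring
    rw [hsplit, Complex.exp_add, ← mul_assoc, hwu, hupolar]
    exact hw_eq

lemma dA_polarRect_pos {r₁ r₂ φ₁ φ₂ : ℝ} (h0 : 0 ≤ r₁) (h12 : r₁ < r₂) (hφ : φ₁ < φ₂) :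
    0 < dA (polarRect r₁ r₂ φ₁ φ₂) := by
  obtain ⟨w, δ, hδ, hsub⟩ := exists_ball_subset_polarRect h0 h12 hφ
  calc (0 : ENNReal) < dA (Metric.ball w δ) := by
        rw [dA_apply]
        exact ENNReal.mul_pos dA_coef_ne_zero (Metric.measure_ball_pos volume w hδ).ne'
  _ ≤ dA (polarRect r₁ r₂ φ₁ φ₂) := measure_mono hsub

end Helpers2

section Helpers3
open Complex

lemma polarRect_subset {r₁ r₂ φ₁ φ₂ r₁' r₂' φ₁' φ₂' : ℝ} (h1 : r₁' ≤ r₁) (h2 : r₂ ≤ r₂')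
    (h3 : φ₁' ≤ φ₁) (h4 : φ₂ ≤ φ₂') : polarRect r₁ r₂ φ₁ φ₂ ⊆ polarRect r₁' r₂' φ₁' φ₂' := by
  rintro w ⟨ρ, φ, a1, a2, a3, a4, rfl⟩
  exact ⟨ρ, φ, h1.trans a1, a2.trans h2, h3.trans a3, a4.trans h4, rfl⟩

lemma polarRect_union_rad {r₁ r₂ r₃ φ₁ φ₂ : ℝ} (h12 : r₁ ≤ r₂) (h23 : r₂ ≤ r₃) :
    polarRect r₁ r₃ φ₁ φ₂ = polarRect r₁ r₂ φ₁ φ₂ ∪ polarRect r₂ r₃ φ₁ φ₂ := by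
  apply Set.Subset.antisymm
  · rintro w ⟨ρ, φ, a1, a2, a3, a4, rfl⟩
    rcases le_total ρ r₂ with h | h
    · exact Or.inl ⟨ρ, φ, a1, h, a3, a4, rfl⟩
    · exact Or.inr ⟨ρ, φ, h, a2, a3, a4, rfl⟩
  · exact Set.union_subset (polarRect_subset le_rfl h23 le_rfl le_rfl)
      (polarRect_subset h12 le_rfl le_rfl le_rfl)

lemma polarRect_union_ang {r₁ r₂ φ₁ φ₂ φ₃ : ℝ} (h12 : φ₁ ≤ φ₂) (h23 : φ₂ ≤ φ₃) :
    polarRect r₁ r₂ φ₁ φ₃ = polarRect r₁ r₂ φ₁ φ₂ ∪ polarRect r₁ r₂ φ₂ φ₃ := by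
  apply Set.Subset.antisymm
  · rintro w ⟨ρ, φ, a1, a2, a3, a4, rfl⟩
    rcases le_total φ φ₂ with h | h
    · exact Or.inl ⟨ρ, φ, a1, a2, a3, h, rfl⟩
    · exact Or.inr ⟨ρ, φ, a1, a2, h, a4, rfl⟩
  · exact Set.union_subset (polarRect_subset le_rfl le_rfl le_rfl h23)
      (polarRect_subset le_rfl le_rfl h12 le_rfl)

lemma norm_bounds_of_mem_polarRect {w : ℂ} {r₁ r₂ φ₁ φ₂ : ℝ} (h0 : 0 ≤ r₁)
    (h : w ∈ polarRect r₁ r₂ φ₁ φ₂) : r₁ ≤ ‖w‖ ∧ ‖w‖ ≤ r₂ := by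
  obtain ⟨ρ, φ, a1, a2, a3, a4, rfl⟩ := h
  rw [norm_polar (h0.trans a1)]
  exact ⟨a1, a2⟩

lemma dA_inter_rad_null {r₁ r₂ r₃ φ₁ φ₂ φ₁' φ₂' : ℝ} (h0 : 0 ≤ r₁) (h0' : 0 ≤ r₂) :
    dA (polarRect r₁ r₂ φ₁ φ₂ ∩ polarRect r₂ r₃ φ₁' φ₂') = 0 := by
  have hsub : polarRect r₁ r₂ φ₁ φ₂ ∩ polarRect r₂ r₃ φ₁' φ₂' ⊆ Metric.sphere (0:ℂ) r₂ := by
    rintro w ⟨hw1, hw2⟩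
    have b1 := (norm_bounds_of_mem_polarRect h0 hw1).2
    have b2 := (norm_bounds_of_mem_polarRect h0' hw2).1
    rw [mem_sphere_iff_norm, sub_zero]
    linarith
  rw [dA_apply]
  exact mul_eq_zero_of_right _
    (measure_mono_null hsub (MeasureTheory.Measure.addHaar_sphere volume 0 r₂))

lemma dA_inter_ang_null {r₁ r₂ r₁' r₂' φ₁ φ₂ φ₃ : ℝ} (h0 : 0 ≤ r₁) (h0' : 0 ≤ r₁')
    (h12 : φ₁ ≤ φ₂) (h23 : φ₂ ≤ φ₃) (hw2π : φ₃ - φ₁ < 2 * Real.pi) :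
    dA (polarRect r₁ r₂ φ₁ φ₂ ∩ polarRect r₁' r₂' φ₂ φ₃) = 0 := by
  set S : Submodule ℝ ℂ := Submodule.span ℝ {Complex.exp ((φ₂:ℂ) * Complex.I)} with hSdef
  have hsub : polarRect r₁ r₂ φ₁ φ₂ ∩ polarRect r₁' r₂' φ₂ φ₃ ⊆ (S : Set ℂ) := by
    rintro w ⟨⟨ρ, φ, a1, a2, a3, a4, hwe⟩, ⟨ρ', φ', b1, b2, b3, b4, hwe'⟩⟩
    rcases eq_or_lt_of_le (h0.trans a1) with hρ0 | hρ0
    · rw [hwe, ← hρ0]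
      simpa using S.zero_mem
    rcases eq_or_lt_of_le (h0'.trans b1) with hρ0' | hρ0'
    · rw [hwe', ← hρ0']
      simpa using S.zero_mem
    have e1 : ‖w‖ = ρ := by rw [hwe, norm_polar hρ0.le]
    have e2 : ‖w‖ = ρ' := by rw [hwe', norm_polar hρ0'.le]
    have hρρ' : ρ = ρ' := by linarith
    subst hρρ'
    have hexp : Complex.exp ((φ:ℂ)*Complex.I) = Complex.exp ((φ':ℂ)*Complex.I) :=
      mul_left_cancel₀ (by exact_mod_cast hρ0.ne' : (ρ:ℂ) ≠ 0) (hwe.symm.trans hwe')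
    rw [Complex.exp_eq_exp_iff_exists_int] at hexp
    obtain ⟨n, hn⟩ := hexp
    have h2 : (φ:ℂ) * Complex.I = ((φ' + n * (2*Real.pi) : ℝ):ℂ) * Complex.I := by
      rw [hn]; push_cast; ring
    have hreal : φ = φ' + n * (2*Real.pi) :=
      Complex.ofReal_injective (mul_right_cancel₀ Complex.I_ne_zero h2)
    have hn0 : n = 0 := by
      by_contra hne
      have h1n : (1:ℝ) ≤ |(n:ℝ)| := by exact_mod_cast Int.one_le_abs hne
      have habs : |φ - φ'| < 2*Real.pi := by
        rw [abs_lt]; constructor <;> linarith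
      have heq : |φ - φ'| = |(n:ℝ)| * (2*Real.pi) := by
        rw [hreal, add_sub_cancel_left, abs_mul, _root_.abs_of_pos Real.two_pi_pos]
      nlinarith [Real.pi_pos]
    rw [hn0] at hreal
    norm_num at hreal
    have hφ2 : φ = φ₂ := le_antisymm a4 (by rw [hreal]; exact b3)
    refine Submodule.mem_span_singleton.2 ⟨ρ, ?_⟩
    rw [Complex.real_smul, hwe, hφ2]
  have hS : S ≠ ⊤ := by
    intro htop
    have hmem : Complex.exp ((φ₂:ℂ)*Complex.I) * Complex.I ∈ S := by rw [htop]; trivial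
    rw [hSdef, Submodule.mem_span_singleton] at hmem
    obtain ⟨a, ha⟩ := hmem
    rw [Complex.real_smul, mul_comm] at ha
    have haI : (a:ℂ) = Complex.I := mul_left_cancel₀ (Complex.exp_ne_zero _) ha
    have := congrArg Complex.im haI
    simp at this
  rw [dA_apply]
  exact mul_eq_zero_of_right _
    (measure_mono_null hsub (MeasureTheory.Measure.addHaar_submodule volume S hS))

end Helpers3

section Helpers4
open Complex MeasureTheory

lemma theta_zero : theta 0 = 0 := by
  unfold theta
  rw [Complex.arg_zero, toIcoMod_eq_self]
  exact ⟨le_rfl, by linarith [Real.two_pi_pos]⟩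

lemma theta_nonneg (z : ℂ) : 0 ≤ theta z := (Set.mem_Ico.1 (toIcoMod_mem_Ico' Real.two_pi_pos _)).1

lemma integrableOn_dA {g : ℂ → ℂ} {K : Set ℂ} (hg : ContinuousOn g unitDisc)
    (hK : IsCompact K) (hsub : K ⊆ unitDisc) : IntegrableOn g K dA := by
  have h1 : IntegrableOn g K volume := (hg.mono hsub).integrableOn_compact hK
  rw [IntegrableOn, dA, Measure.restrict_smul]
  exact h1.smul_measure dA_coef_ne_top

lemma measurableSet_Bz (z : ℂ) : MeasurableSet (Bz z) := measurableSet_polarRect _ _ _ _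

lemma measurableSet_Bzz (z ζ : ℂ) : MeasurableSet (Bzz z ζ) := measurableSet_polarRect _ _ _ _

lemma Bz_subset_unitDisc {z : ℂ} (hz : z ∈ unitDisc) : Bz z ⊆ unitDisc := by
  intro w hw
  have := (norm_bounds_of_mem_polarRect (norm_nonneg z) hw).2
  have hz1 : ‖z‖ < 1 := hz
  show ‖w‖ < 1
  linarith

lemma mem_Bz_self {z : ℂ} (hz : z ∈ unitDisc) : z ∈ Bz z := by
  have hz1 : ‖z‖ < 1 := hz
  refine ⟨‖z‖, theta z, le_rfl, by linarith, le_rfl, ?_, (polar_theta z).symm⟩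
  nlinarith [Real.pi_pos]

lemma angFrom_le {z ζ : ℂ} (hz : z ∈ unitDisc) (hζ : ζ ∈ Bz z) :
    angFrom z ζ ≤ theta z + Real.pi * (1 - ‖z‖) := by
  obtain ⟨ρ, φ, a1, a2, a3, a4, hwe⟩ := hζ
  have hρ0 : 0 ≤ ρ := (norm_nonneg z).trans a1
  rcases eq_or_lt_of_le hρ0 with h | h
  · have hζ0 : ζ = 0 := by rw [hwe, ← h]; simp
    have hz0 : z = 0 := by
      have : ‖z‖ ≤ 0 := by rw [h]; exact a1
      exact norm_eq_zero.1 (le_antisymm this (norm_nonneg z))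
    subst hz0; subst hζ0
    unfold angFrom
    rw [theta_zero, Complex.arg_zero]
    have h2 : toIcoMod Real.two_pi_pos 0 (0:ℝ) = 0 := by
      rw [toIcoMod_eq_self]; exact ⟨le_rfl, by linarith [Real.two_pi_pos]⟩
    rw [h2]
    simp
    positivity
  · have hφlt : φ < theta z + 2 * Real.pi := by
      have h1 : Real.pi * (1 - ‖z‖) ≤ Real.pi := by nlinarith [Real.pi_pos, norm_nonneg z]
      linarith [Real.pi_pos]
    rw [hwe, angFrom_polar h a3 hφlt]
    exact a4

lemma norm_le_of_mem_Bz {z ζ : ℂ} (hζ : ζ ∈ Bz z) : ‖ζ‖ ≤ 1 - (1 - ‖z‖) / 2 :=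
  (norm_bounds_of_mem_polarRect (norm_nonneg z) hζ).2

lemma Bzz_subset_Bz {z ζ : ℂ} (hz : z ∈ unitDisc) (hζ : ζ ∈ Bz z) : Bzz z ζ ⊆ Bz z :=
  polarRect_subset le_rfl (norm_le_of_mem_Bz hζ) le_rfl (angFrom_le hz hζ)

lemma dA_Bz_toReal_pos {z : ℂ} (hz : z ∈ unitDisc) : 0 < (dA (Bz z)).toReal := by
  have hz1 : ‖z‖ < 1 := hz
  refine ENNReal.toReal_pos (dA_polarRect_pos (norm_nonneg z) (by linarith) ?_).ne'
    (dA_ne_top (isCompact_polarRect _ _ _ _))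
  nlinarith [Real.pi_pos]

end Helpers4

section Core
open Complex MeasureTheory

lemma corner_zero {f : ℂ → ℂ} {z : ℂ}
    (hvan : ∀ ζ ∈ Bz z, ∫ ξ in Bzz z ζ, (f ξ - avg f z) ∂dA = 0)
    {ρ φ : ℝ} (h1 : ‖z‖ ≤ ρ) (h2 : ρ ≤ 1 - (1 - ‖z‖)/2) (h3 : theta z ≤ φ)
    (h4 : φ ≤ theta z + Real.pi * (1 - ‖z‖)) :
    ∫ ξ in polarRect ‖z‖ ρ (theta z) φ, (f ξ - avg f z) ∂dA = 0 := by
  rcases eq_or_lt_of_le ((norm_nonneg z).trans h1) with hρ | hρ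
  · apply setIntegral_measure_zero
    have hsub : polarRect ‖z‖ ρ (theta z) φ ⊆ Metric.sphere (0:ℂ) 0 := by
      intro w hw
      have hb := norm_bounds_of_mem_polarRect (norm_nonneg z) hw
      rw [mem_sphere_iff_norm, sub_zero]
      have : (0:ℝ) = ρ := hρ
      have h5 := norm_nonneg w
      linarith [hb.2]
    rw [dA_apply]
    exact mul_eq_zero_of_right _
      (measure_mono_null hsub (MeasureTheory.Measure.addHaar_sphere volume (0:ℂ) 0))
  · have hB : Bzz z ((ρ:ℂ) * Complex.exp ((φ:ℂ) * Complex.I))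
        = polarRect ‖z‖ ρ (theta z) φ := by
      unfold Bzz
      rw [norm_polar hρ.le, angFrom_polar hρ h3 ?hlt]
      case hlt =>
        nlinarith [Real.pi_pos, mul_nonneg Real.pi_pos.le (norm_nonneg z)]
    rw [← hB]
    exact hvan _ ⟨ρ, φ, h1, h2, h3, h4, rfl⟩

lemma subrect_zero {f : ℂ → ℂ} (hc : ContinuousOn f unitDisc) {z : ℂ} (hz : z ∈ unitDisc)
    (hvan : ∀ ζ ∈ Bz z, ∫ ξ in Bzz z ζ, (f ξ - avg f z) ∂dA = 0)
    {ρ₁ ρ₂ φ₁ φ₂ : ℝ}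
    (a1 : ‖z‖ ≤ ρ₁) (a2 : ρ₁ ≤ ρ₂) (a3 : ρ₂ ≤ 1 - (1-‖z‖)/2)
    (b1 : theta z ≤ φ₁) (b2 : φ₁ ≤ φ₂) (b3 : φ₂ ≤ theta z + Real.pi * (1-‖z‖)) :
    ∫ ξ in polarRect ρ₁ ρ₂ φ₁ φ₂, (f ξ - avg f z) ∂dA = 0 := by
  have hz1 : ‖z‖ < 1 := hz
  have hgc : ContinuousOn (fun ξ => f ξ - avg f z) unitDisc := hc.sub continuousOn_const
  have hint : ∀ a b c d : ℝ, ‖z‖ ≤ a → b ≤ 1 - (1-‖z‖)/2 →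
      IntegrableOn (fun ξ => f ξ - avg f z) (polarRect a b c d) dA := by
    intro a b c d ha hb
    apply integrableOn_dA hgc (isCompact_polarRect _ _ _ _)
    intro w hw
    have := (norm_bounds_of_mem_polarRect ((norm_nonneg z).trans ha) hw).2
    show ‖w‖ < 1
    linarith
  have e22 := corner_zero hvan (a1.trans a2) a3 (b1.trans b2) b3
  have e12 := corner_zero hvan a1 (a2.trans a3) (b1.trans b2) b3
  have e21 := corner_zero hvan (a1.trans a2) a3 b1 (b2.trans b3)
  have e11 := corner_zero hvan a1 (a2.trans a3) b1 (b2.trans b3)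
  have hsR2 : ∫ ξ in polarRect ‖z‖ ρ₂ (theta z) φ₂, (f ξ - avg f z) ∂dA
      = (∫ ξ in polarRect ‖z‖ ρ₁ (theta z) φ₂, (f ξ - avg f z) ∂dA)
        + ∫ ξ in polarRect ρ₁ ρ₂ (theta z) φ₂, (f ξ - avg f z) ∂dA := by
    rw [polarRect_union_rad a1 a2]
    exact integral_union_ae (dA_inter_rad_null (norm_nonneg z) ((norm_nonneg z).trans a1))
      (measurableSet_polarRect _ _ _ _).nullMeasurableSet
      (hint _ _ _ _ le_rfl (a2.trans a3)) (hint _ _ _ _ a1 a3)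
  have hsR1 : ∫ ξ in polarRect ‖z‖ ρ₂ (theta z) φ₁, (f ξ - avg f z) ∂dA
      = (∫ ξ in polarRect ‖z‖ ρ₁ (theta z) φ₁, (f ξ - avg f z) ∂dA)
        + ∫ ξ in polarRect ρ₁ ρ₂ (theta z) φ₁, (f ξ - avg f z) ∂dA := by
    rw [polarRect_union_rad a1 a2]
    exact integral_union_ae (dA_inter_rad_null (norm_nonneg z) ((norm_nonneg z).trans a1))
      (measurableSet_polarRect _ _ _ _).nullMeasurableSet
      (hint _ _ _ _ le_rfl (a2.trans a3)) (hint _ _ _ _ a1 a3)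
  rw [e22, e12] at hsR2
  rw [e21, e11] at hsR1
  have hA : ∫ ξ in polarRect ρ₁ ρ₂ (theta z) φ₂, (f ξ - avg f z) ∂dA = 0 := by
    symm at hsR2; simpa using hsR2
  have hB : ∫ ξ in polarRect ρ₁ ρ₂ (theta z) φ₁, (f ξ - avg f z) ∂dA = 0 := by
    symm at hsR1; simpa using hsR1
  have hsA : ∫ ξ in polarRect ρ₁ ρ₂ (theta z) φ₂, (f ξ - avg f z) ∂dA
      = (∫ ξ in polarRect ρ₁ ρ₂ (theta z) φ₁, (f ξ - avg f z) ∂dA)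
        + ∫ ξ in polarRect ρ₁ ρ₂ φ₁ φ₂, (f ξ - avg f z) ∂dA := by
    rw [polarRect_union_ang b1 b2]
    refine integral_union_ae
      (dA_inter_ang_null ((norm_nonneg z).trans a1) ((norm_nonneg z).trans a1) b1 b2 ?_)
      (measurableSet_polarRect _ _ _ _).nullMeasurableSet
      (hint _ _ _ _ a1 a3) (hint _ _ _ _ a1 a3)
    nlinarith [Real.pi_pos, mul_nonneg Real.pi_pos.le (norm_nonneg z)]
  rw [hA, hB] at hsA
  symm at hsA; simpa using hsA

end Core

section Core2
open Complex MeasureTheory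

lemma isOpen_unitDisc : IsOpen unitDisc := isOpen_lt continuous_norm continuous_const

lemma norm_exp_I_sub_exp_I {x y : ℝ} (h : |x - y| ≤ 1) :
    ‖Complex.exp ((x:ℂ)*Complex.I) - Complex.exp ((y:ℂ)*Complex.I)‖ ≤ 2*|x - y| := by
  have hfac : Complex.exp ((x:ℂ)*Complex.I) - Complex.exp ((y:ℂ)*Complex.I)
      = Complex.exp ((y:ℂ)*Complex.I) * (Complex.exp (((x-y:ℝ):ℂ)*Complex.I) - 1) := by
    rw [mul_sub, mul_one, ← Complex.exp_add]
    push_cast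
    ring_nf
  have habs : ‖((x-y:ℝ):ℂ)*Complex.I‖ = |x-y| := by
    rw [norm_mul, Complex.norm_I, mul_one, Complex.norm_real, Real.norm_eq_abs]
  rw [hfac, norm_mul, norm_exp_I, one_mul]
  calc ‖Complex.exp (((x-y:ℝ):ℂ)*Complex.I) - 1‖
      ≤ 2 * ‖((x-y:ℝ):ℂ)*Complex.I‖ :=
        Complex.norm_exp_sub_one_le (by rw [habs]; exact h)
  _ = 2*|x-y| := by rw [habs]

lemma interior_eq {f : ℂ → ℂ} (hc : ContinuousOn f unitDisc) {z : ℂ} (hz : z ∈ unitDisc)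
    (hvan : ∀ ζ ∈ Bz z, ∫ ξ in Bzz z ζ, (f ξ - avg f z) ∂dA = 0)
    {ρ₀ φ₀ : ℝ} (a1 : ‖z‖ ≤ ρ₀) (a2 : ρ₀ < 1 - (1-‖z‖)/2)
    (b1 : theta z ≤ φ₀) (b2 : φ₀ < theta z + Real.pi * (1-‖z‖)) :
    f ((ρ₀:ℂ) * Complex.exp ((φ₀:ℂ)*Complex.I)) = avg f z := by
  have hz1 : ‖z‖ < 1 := hz
  have hρ₀0 : 0 ≤ ρ₀ := (norm_nonneg z).trans a1
  have hρ₀1 : ρ₀ < 1 := by linarith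
  by_contra hne
  set w₀ : ℂ := (ρ₀:ℂ) * Complex.exp ((φ₀:ℂ)*Complex.I) with hw₀def
  have hw₀disc : w₀ ∈ unitDisc := by
    show ‖w₀‖ < 1
    rw [hw₀def, norm_polar hρ₀0]
    exact hρ₀1
  set a : ℂ := f w₀ - avg f z with hadef
  have ha0 : a ≠ 0 := sub_ne_zero.2 hne
  have hna : 0 < ‖a‖ := norm_pos_iff.2 ha0
  have hca : ContinuousAt f w₀ := hc.continuousAt (isOpen_unitDisc.mem_nhds hw₀disc)
  obtain ⟨ε₀, hε₀, hδ⟩ := Metric.continuousAt_iff.1 hca (‖a‖/2) (by positivity)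
  have hpt : ∀ ξ : ℂ, dist ξ w₀ < ε₀ →
      ‖a‖^2/2 ≤ ((starRingEnd ℂ) a * (f ξ - avg f z)).re := by
    intro ξ hξ
    have hd := hδ hξ
    rw [dist_eq_norm] at hd
    have hsplit : (starRingEnd ℂ) a * (f ξ - avg f z)
        = (starRingEnd ℂ) a * a + (starRingEnd ℂ) a * (f ξ - f w₀) := by
      rw [← mul_add]
      congr 1
      rw [hadef]
      ring
    rw [hsplit, Complex.add_re]
    have h1 : ((starRingEnd ℂ) a * a).re = ‖a‖^2 := by
      rw [mul_comm, Complex.mul_conj, Complex.ofReal_re, Complex.normSq_eq_norm_sq]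
    have h2 : |((starRingEnd ℂ) a * (f ξ - f w₀)).re| ≤ ‖a‖ * (‖a‖/2) := by
      calc |((starRingEnd ℂ) a * (f ξ - f w₀)).re|
          ≤ ‖(starRingEnd ℂ) a * (f ξ - f w₀)‖ := by
            exact Complex.abs_re_le_norm _
      _ = ‖(starRingEnd ℂ) a‖ * ‖f ξ - f w₀‖ := norm_mul _ _
      _ ≤ ‖a‖ * (‖a‖/2) := by
            rw [RCLike.norm_conj]
            exact mul_le_mul_of_nonneg_left hd.le (norm_nonneg a)
    have h3 := (abs_le.1 h2).1
    rw [h1]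
    nlinarith [sq_nonneg ‖a‖]
  set Rbig : ℝ := 1 - (1-‖z‖)/2 with hRdef
  set Θbig : ℝ := theta z + Real.pi * (1-‖z‖) with hΘdef
  set ε : ℝ := min (min (Rbig - ρ₀) (Θbig - φ₀)) (min (ε₀/4) 1) with hεdef
  have hε : 0 < ε :=
    lt_min (lt_min (by linarith) (by linarith)) (lt_min (by positivity) one_pos)
  have hεA : ε ≤ Rbig - ρ₀ := le_trans (min_le_left _ _) (min_le_left _ _)
  have hεB : ε ≤ Θbig - φ₀ := le_trans (min_le_left _ _) (min_le_right _ _)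
  have hε4 : ε ≤ ε₀/4 := le_trans (min_le_right _ _) (min_le_left _ _)
  have hε1 : ε ≤ 1 := le_trans (min_le_right _ _) (min_le_right _ _)
  set Rset : Set ℂ := polarRect ρ₀ (ρ₀+ε) φ₀ (φ₀+ε) with hRsetdef
  have hsubball : ∀ ξ ∈ Rset, dist ξ w₀ < ε₀ := by
    rintro ξ ⟨ρ, φ, c1, c2, c3, c4, rfl⟩
    have hφabs : |φ - φ₀| ≤ ε := abs_le.2 ⟨by linarith, by linarith⟩
    rw [dist_eq_norm, hw₀def]
    have hkey : (ρ:ℂ) * Complex.exp ((φ:ℂ)*Complex.I) - (ρ₀:ℂ) * Complex.exp ((φ₀:ℂ)*Complex.I)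
        = ((ρ - ρ₀ : ℝ):ℂ) * Complex.exp ((φ:ℂ)*Complex.I)
          + (ρ₀:ℂ) * (Complex.exp ((φ:ℂ)*Complex.I) - Complex.exp ((φ₀:ℂ)*Complex.I)) := by
      push_cast
      ring
    rw [hkey]
    calc ‖((ρ - ρ₀ : ℝ):ℂ) * Complex.exp ((φ:ℂ)*Complex.I)
          + (ρ₀:ℂ) * (Complex.exp ((φ:ℂ)*Complex.I) - Complex.exp ((φ₀:ℂ)*Complex.I))‖
        ≤ ‖((ρ - ρ₀ : ℝ):ℂ) * Complex.exp ((φ:ℂ)*Complex.I)‖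
          + ‖(ρ₀:ℂ) * (Complex.exp ((φ:ℂ)*Complex.I) - Complex.exp ((φ₀:ℂ)*Complex.I))‖ :=
          norm_add_le _ _
    _ = |ρ - ρ₀| + ρ₀ * ‖Complex.exp ((φ:ℂ)*Complex.I) - Complex.exp ((φ₀:ℂ)*Complex.I)‖ := by
          rw [norm_mul, norm_mul, norm_exp_I, mul_one, Complex.norm_real, Real.norm_eq_abs,
            Complex.norm_real, Real.norm_eq_abs, _root_.abs_of_nonneg hρ₀0]
    _ ≤ ε + 1 * (2 * |φ - φ₀|) := by
          have hb := norm_exp_I_sub_exp_I (hφabs.trans hε1)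
          have habsρ : |ρ - ρ₀| ≤ ε := abs_le.2 ⟨by linarith, by linarith⟩
          have h2 : ρ₀ * ‖Complex.exp ((φ:ℂ)*Complex.I) - Complex.exp ((φ₀:ℂ)*Complex.I)‖
              ≤ 1 * (2 * |φ - φ₀|) := by
            apply mul_le_mul hρ₀1.le hb (norm_nonneg _) zero_le_one |>.trans
            nlinarith [abs_nonneg (φ - φ₀)]
          linarith
    _ ≤ ε + 2*ε := by nlinarith [abs_nonneg (φ - φ₀)]
    _ < ε₀ := by linarith
  have hzero : ∫ ξ in Rset, (f ξ - avg f z) ∂dA = 0 :=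
    subrect_zero hc hz hvan a1 (by linarith) (by rw [← hRdef]; linarith)
      b1 (by linarith) (by rw [← hΘdef]; linarith)
  have hintR : IntegrableOn (fun ξ => f ξ - avg f z) Rset dA := by
    apply integrableOn_dA (hc.sub continuousOn_const) (isCompact_polarRect _ _ _ _)
    intro w hw
    have := (norm_bounds_of_mem_polarRect hρ₀0 hw).2
    show ‖w‖ < 1
    have : ρ₀ + ε ≤ Rbig := by linarith
    have hR1 : Rbig < 1 := by rw [hRdef]; linarith
    linarith [(norm_bounds_of_mem_polarRect hρ₀0 hw).2]
  have hre_eq : ∫ ξ in Rset, ((starRingEnd ℂ) a * (f ξ - avg f z)).re ∂dA = 0 := by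
    have h1 : ∫ ξ in Rset, (starRingEnd ℂ) a * (f ξ - avg f z) ∂dA
        = (starRingEnd ℂ) a * ∫ ξ in Rset, (f ξ - avg f z) ∂dA := integral_const_mul _ _
    have h2 := _root_.integral_re (μ := dA.restrict Rset) (hintR.const_mul ((starRingEnd ℂ) a))
    simp only [RCLike.re_to_complex] at h2
    rw [h2, h1, hzero, mul_zero, Complex.zero_re]
  have hlow : ‖a‖^2/2 * (dA Rset).toReal
      ≤ ∫ ξ in Rset, ((starRingEnd ℂ) a * (f ξ - avg f z)).re ∂dA := by
    apply setIntegral_ge_of_const_le_real (measurableSet_polarRect _ _ _ _)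
      (dA_ne_top (isCompact_polarRect _ _ _ _))
      (fun ξ hξ => hpt ξ (hsubball ξ hξ))
    have := (hintR.const_mul ((starRingEnd ℂ) a)).re
    simpa only [RCLike.re_to_complex, IntegrableOn] using this
  have hpos : 0 < (dA Rset).toReal :=
    ENNReal.toReal_pos (dA_polarRect_pos hρ₀0 (by linarith) (by linarith)).ne'
      (dA_ne_top (isCompact_polarRect _ _ _ _))
  nlinarith [hlow, hre_eq, hpos, sq_nonneg ‖a‖, mul_pos (by positivity : (0:ℝ) < ‖a‖^2/2) hpos]

end Core2

section Core3
open Complex MeasureTheory Filter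

set_option maxHeartbeats 1000000 in
lemma onBz_eq {f : ℂ → ℂ} (hc : ContinuousOn f unitDisc) {z : ℂ} (hz : z ∈ unitDisc)
    (hvan : ∀ ζ ∈ Bz z, ∫ ξ in Bzz z ζ, (f ξ - avg f z) ∂dA = 0)
    {ρ φ : ℝ} (a1 : ‖z‖ ≤ ρ) (a2 : ρ ≤ 1 - (1-‖z‖)/2)
    (b1 : theta z ≤ φ) (b2 : φ ≤ theta z + Real.pi * (1-‖z‖)) :
    f ((ρ:ℂ) * Complex.exp ((φ:ℂ)*Complex.I)) = avg f z := by
  have hz1 : ‖z‖ < 1 := hz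
  have hπ : 0 < Real.pi * (1-‖z‖) := by
    have := Real.pi_pos
    nlinarith
  set r : ℝ := ‖z‖ with hr
  set Rb : ℝ := 1 - (1-‖z‖)/2 with hRb
  set θb : ℝ := theta z with hθb
  set Θb : ℝ := theta z + Real.pi * (1-‖z‖) with hΘb
  have hrR : r < Rb := by rw [hr, hRb]; linarith
  have hθΘ : θb < Θb := by rw [hθb, hΘb]; linarith
  set ρm : ℝ := (r + Rb)/2 with hρm
  set φm : ℝ := (θb + Θb)/2 with hφm
  -- approximating sequences
  have hbounds : ∀ n : ℕ, r ≤ ρ + (ρm - ρ) * (1/(n+1)) ∧ ρ + (ρm - ρ) * (1/(n+1)) < Rb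
      ∧ θb ≤ φ + (φm - φ) * (1/(n+1)) ∧ φ + (φm - φ) * (1/(n+1)) < Θb := by
    intro n
    have ht0 : 0 < (1:ℝ)/(n+1) := by positivity
    have ht1 : (1:ℝ)/(n+1) ≤ 1 := by
      rw [div_le_one (by positivity)]
      have : (0:ℝ) ≤ n := Nat.cast_nonneg n
      linarith
    have hρmlt : r < ρm ∧ ρm < Rb := by constructor <;> (rw [hρm]; linarith)
    have hφmlt : θb < φm ∧ φm < Θb := by constructor <;> (rw [hφm]; linarith)
    have e1 : (1 - 1/(n+1)) * r ≤ (1 - 1/(n+1)) * ρ :=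
      mul_le_mul_of_nonneg_left a1 (by linarith)
    have e2 : (1/(n+1)) * r < (1/(n+1)) * ρm := by
      exact mul_lt_mul_of_pos_left hρmlt.1 ht0
    have e3 : (1 - 1/(n+1)) * ρ ≤ (1 - 1/(n+1)) * Rb :=
      mul_le_mul_of_nonneg_left a2 (by linarith)
    have e4 : (1/(n+1)) * ρm < (1/(n+1)) * Rb := mul_lt_mul_of_pos_left hρmlt.2 ht0
    have g1 : (1 - 1/(n+1)) * θb ≤ (1 - 1/(n+1)) * φ :=
      mul_le_mul_of_nonneg_left b1 (by linarith)
    have g2 : (1/(n+1)) * θb < (1/(n+1)) * φm := mul_lt_mul_of_pos_left hφmlt.1 ht0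
    have g3 : (1 - 1/(n+1)) * φ ≤ (1 - 1/(n+1)) * Θb :=
      mul_le_mul_of_nonneg_left b2 (by linarith)
    have g4 : (1/(n+1)) * φm < (1/(n+1)) * Θb := mul_lt_mul_of_pos_left hφmlt.2 ht0
    refine ⟨by nlinarith, by nlinarith, by nlinarith, by nlinarith⟩
  have hval : ∀ n : ℕ, f (((ρ + (ρm - ρ) * (1/(n+1)) : ℝ) : ℂ)
      * Complex.exp (((φ + (φm - φ) * (1/(n+1)) : ℝ) : ℂ)*Complex.I)) = avg f z := by
    intro n
    obtain ⟨e1, e2, e3, e4⟩ := hbounds n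
    exact interior_eq hc hz hvan e1 e2 e3 e4
  -- limits
  have hten : Tendsto (fun n : ℕ => (1:ℝ)/(n+1)) atTop (nhds 0) :=
    tendsto_one_div_add_atTop_nhds_zero_nat
  have hρlim : Tendsto (fun n : ℕ => ρ + (ρm - ρ) * (1/(n+1))) atTop (nhds ρ) := by
    have h := (hten.const_mul (ρm - ρ)).const_add ρ
    rw [mul_zero, add_zero] at h
    exact h
  have hφlim : Tendsto (fun n : ℕ => φ + (φm - φ) * (1/(n+1))) atTop (nhds φ) := by
    have h := (hten.const_mul (φm - φ)).const_add φ
    rw [mul_zero, add_zero] at h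
    exact h
  have hwlim : Tendsto (fun n : ℕ => ((ρ + (ρm - ρ) * (1/(n+1)) : ℝ) : ℂ)
      * Complex.exp (((φ + (φm - φ) * (1/(n+1)) : ℝ) : ℂ)*Complex.I)) atTop
      (nhds ((ρ:ℂ) * Complex.exp ((φ:ℂ)*Complex.I))) := by
    apply Tendsto.mul
    · exact (Complex.continuous_ofReal.tendsto ρ).comp hρlim
    · exact (Complex.continuous_exp.tendsto _).comp
        (((Complex.continuous_ofReal.tendsto φ).comp hφlim).mul_const Complex.I)
  have hρ0 : 0 ≤ ρ := (norm_nonneg z).trans a1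
  have hwdisc : (ρ:ℂ) * Complex.exp ((φ:ℂ)*Complex.I) ∈ unitDisc := by
    show ‖_‖ < 1
    rw [norm_polar hρ0]
    rw [hRb] at a2
    linarith
  have hfc : ContinuousAt f ((ρ:ℂ) * Complex.exp ((φ:ℂ)*Complex.I)) :=
    hc.continuousAt (isOpen_unitDisc.mem_nhds hwdisc)
  have hflim := (hfc.tendsto).comp hwlim
  have : Tendsto (fun _ : ℕ => avg f z) atTop (nhds (f ((ρ:ℂ) * Complex.exp ((φ:ℂ)*Complex.I)))) := by
    refine Tendsto.congr (fun n => ?_) hflim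
    exact hval n
  exact (tendsto_nhds_unique tendsto_const_nhds this).symm

lemma vanish_of_wQuot {f : ℂ → ℂ} {z : ℂ} (hz : z ∈ unitDisc)
    (h : ∀ ζ ∈ Bz z, wQuot f z ζ = 0) :
    ∀ ζ ∈ Bz z, ∫ ξ in Bzz z ζ, (f ξ - avg f z) ∂dA = 0 := by
  intro ζ hζ
  have h1 := h ζ hζ
  unfold wQuot at h1
  have hT := dA_Bz_toReal_pos hz
  rcases mul_eq_zero.1 h1 with h2 | h2
  · exact absurd h2 (by positivity)
  · exact norm_eq_zero.1 h2

lemma key_step {f : ℂ → ℂ} (hc : ContinuousOn f unitDisc) {z : ℂ} (hz : z ∈ unitDisc)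
    (h0 : ∀ ζ ∈ Bz z, wQuot f z ζ = 0)
    {ρ φ : ℝ} (a1 : ‖z‖ ≤ ρ) (a2 : ρ ≤ 1 - (1-‖z‖)/2)
    (b1 : theta z ≤ φ) (b2 : φ ≤ theta z + Real.pi * (1-‖z‖)) :
    f ((ρ:ℂ) * Complex.exp ((φ:ℂ)*Complex.I)) = f z := by
  have hvan := vanish_of_wQuot hz h0
  have h1 := onBz_eq hc hz hvan a1 a2 b1 b2
  have hz1 : ‖z‖ < 1 := hz
  have h2 : f ((‖z‖:ℂ) * Complex.exp ((theta z:ℂ)*Complex.I)) = avg f z := by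
    refine onBz_eq hc hz hvan le_rfl (by linarith) le_rfl ?_
    nlinarith [Real.pi_pos]
  rw [polar_theta z] at h2
  rw [h1, h2]

end Core3

section Chain
open Complex MeasureTheory

lemma ang_step {f : ℂ → ℂ} (hc : ContinuousOn f unitDisc)
    (h0 : ∀ z ∈ unitDisc, ∀ ζ ∈ Bz z, wQuot f z ζ = 0)
    {ρ ψ t : ℝ} (hρ0 : 0 ≤ ρ) (hρ : ρ ≤ 1/2) (ht0 : 0 ≤ t) (ht : t ≤ Real.pi/2) :
    f ((ρ:ℂ) * Complex.exp (((ψ+t : ℝ):ℂ)*Complex.I))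
      = f ((ρ:ℂ)*Complex.exp ((ψ:ℂ)*Complex.I)) := by
  rcases eq_or_lt_of_le hρ0 with h | h
  · rw [← h]; norm_num
  · set z : ℂ := (ρ:ℂ)*Complex.exp ((ψ:ℂ)*Complex.I) with hzdef
    have hnz : ‖z‖ = ρ := by rw [hzdef, norm_polar hρ0]
    have hzd : z ∈ unitDisc := by show ‖z‖ < 1; rw [hnz]; linarith
    have hstep := key_step hc hzd (h0 z hzd) (ρ := ρ) (φ := theta z + t)
      (by rw [hnz]) (by rw [hnz]; linarith) (by linarith)
      (by rw [hnz]; nlinarith [Real.pi_pos])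
    have hpteq : (ρ:ℂ) * Complex.exp (((ψ+t : ℝ):ℂ)*Complex.I)
        = (ρ:ℂ) * Complex.exp (((theta z + t : ℝ):ℂ)*Complex.I) := by
      have hsplit1 : ((ψ+t : ℝ):ℂ)*Complex.I = (ψ:ℂ)*Complex.I + (t:ℂ)*Complex.I := by
        push_cast; ring
      have hsplit2 : ((theta z+t : ℝ):ℂ)*Complex.I
          = ((theta z : ℝ):ℂ)*Complex.I + (t:ℂ)*Complex.I := by push_cast; ring
      rw [hsplit1, hsplit2, Complex.exp_add, Complex.exp_add, ← mul_assoc, ← mul_assoc]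
      congr 1
      have hp := polar_theta z
      rw [hnz] at hp
      rw [hp]
    rw [hpteq, hstep]

lemma circle_eq {f : ℂ → ℂ} (hc : ContinuousOn f unitDisc)
    (h0 : ∀ z ∈ unitDisc, ∀ ζ ∈ Bz z, wQuot f z ζ = 0)
    {ρ : ℝ} (hρ0 : 0 ≤ ρ) (hρ : ρ ≤ 1/2) (ψ ψ' : ℝ) :
    f ((ρ:ℂ)*Complex.exp ((ψ:ℂ)*Complex.I)) = f ((ρ:ℂ)*Complex.exp ((ψ':ℂ)*Complex.I)) := by
  have aux : ∀ n : ℕ, ∀ t : ℝ, 0 ≤ t → t ≤ n*(Real.pi/2) →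
      f ((ρ:ℂ)*Complex.exp (((ψ'+t:ℝ):ℂ)*Complex.I))
        = f ((ρ:ℂ)*Complex.exp ((ψ':ℂ)*Complex.I)) := by
    intro n
    induction n with
    | zero =>
      intro t ht0 ht1
      have ht : t = 0 := le_antisymm (by simpa using ht1) ht0
      subst ht
      norm_num
    | succ n ih =>
      intro t ht0 ht1
      rcases le_or_gt t (Real.pi/2) with h | h
      · exact ang_step hc h0 hρ0 hρ ht0 h
      · have h1 : ψ' + t = (ψ' + (t - Real.pi/2)) + Real.pi/2 := by ring
        rw [h1]
        rw [ang_step hc h0 hρ0 hρ (by positivity : (0:ℝ) ≤ Real.pi/2) le_rfl]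
        apply ih (t - Real.pi/2) (by linarith)
        push_cast at ht1 ⊢
        linarith
  set t : ℝ := toIcoMod Real.two_pi_pos 0 (ψ - ψ') with htdef
  have htmem := toIcoMod_mem_Ico' Real.two_pi_pos (ψ - ψ')
  rw [Set.mem_Ico] at htmem
  have hrep : ψ = (ψ' + t) + (toIcoDiv Real.two_pi_pos 0 (ψ - ψ')) * (2*Real.pi) := by
    have h2 := toIcoMod_add_toIcoDiv_zsmul Real.two_pi_pos 0 (ψ - ψ')
    rw [zsmul_eq_mul] at h2
    rw [htdef]
    linarith [h2]
  have hexp : Complex.exp ((ψ:ℂ)*Complex.I) = Complex.exp (((ψ'+t:ℝ):ℂ)*Complex.I) :=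
    exp_I_periodic _ hrep
  rw [hexp]
  refine aux 4 t htmem.1 ?_
  push_cast
  linarith [htmem.2]

lemma global_eq {f : ℂ → ℂ} (hc : ContinuousOn f unitDisc)
    (h0 : ∀ z ∈ unitDisc, ∀ ζ ∈ Bz z, wQuot f z ζ = 0) :
    ∀ n : ℕ, ∀ s : ℝ, 0 ≤ s → s ≤ 1 - (1/2)^n → ∀ ψ : ℝ,
    f ((s:ℂ) * Complex.exp ((ψ:ℂ)*Complex.I)) = f 0 := by
  intro n
  induction n with
  | zero =>
    intro s hs0 hs1 ψ
    have hs : s = 0 := le_antisymm (by norm_num at hs1; linarith) hs0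
    subst hs
    norm_num
  | succ n ih =>
    intro s hs0 hs1 ψ
    have hhalf : (0:ℝ) < (1/2:ℝ)^(n+1) := by positivity
    have hhalfn : (0:ℝ) < (1/2:ℝ)^n := by positivity
    have hs_lt1 : s < 1 := by linarith
    rcases le_or_gt (2*s - 1) 0 with hcase | hcase
    · have hs12 : s ≤ 1/2 := by linarith
      have h0d : (0:ℂ) ∈ unitDisc := by show ‖(0:ℂ)‖ < 1; simp
      have hbase : f ((s:ℂ) * Complex.exp (((0:ℝ):ℂ)*Complex.I)) = f 0 := by
        have hkey := key_step hc h0d (h0 0 h0d) (ρ := s) (φ := 0)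
          (by simpa using hs0) (by simp; linarith) (by rw [theta_zero])
          (by rw [theta_zero]; simp; positivity)
        exact hkey
      calc f ((s:ℂ)*Complex.exp ((ψ:ℂ)*Complex.I))
          = f ((s:ℂ)*Complex.exp (((0:ℝ):ℂ)*Complex.I)) := circle_eq hc h0 hs0 hs12 ψ 0
      _ = f 0 := hbase
    · set s' : ℝ := 2*s - 1 with hs'def
      have hs'0 : 0 ≤ s' := hcase.le
      have hpow : (1/2:ℝ)^(n+1) = (1/2)^n * (1/2) := pow_succ _ _
      have hs'le : s' ≤ 1 - (1/2)^n := by rw [hs'def]; linarith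
      have hs's : s' ≤ s := by rw [hs'def]; linarith
      set z : ℂ := ((s':ℝ):ℂ) * Complex.exp ((ψ:ℂ)*Complex.I) with hzdef
      have hnz : ‖z‖ = s' := by rw [hzdef, norm_polar hs'0]
      have hzd : z ∈ unitDisc := by show ‖z‖ < 1; rw [hnz]; linarith
      have hstep := key_step hc hzd (h0 z hzd) (ρ := s) (φ := theta z)
        (by rw [hnz]; exact hs's) (by rw [hnz, hs'def]; linarith) le_rfl
        (by rw [hnz]; nlinarith [Real.pi_pos])
      have hs'ne : ((s':ℝ):ℂ) ≠ 0 := by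
        exact_mod_cast ne_of_gt hcase
      have hpt : (s:ℂ) * Complex.exp (((theta z : ℝ):ℂ)*Complex.I)
          = (s:ℂ)*Complex.exp ((ψ:ℂ)*Complex.I) := by
        congr 1
        have hp := polar_theta z
        rw [hnz] at hp
        have h3 := hp.trans hzdef
        exact mul_left_cancel₀ hs'ne h3
      rw [← hpt, hstep, hzdef]
      exact ih s' hs'0 hs'le ψ

lemma all_const {f : ℂ → ℂ} (hc : ContinuousOn f unitDisc)
    (h0 : ∀ z ∈ unitDisc, ∀ ζ ∈ Bz z, wQuot f z ζ = 0) :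
    ∀ w ∈ unitDisc, f w = f 0 := by
  intro w hw
  have hw1 : ‖w‖ < 1 := hw
  obtain ⟨n, hn⟩ := exists_pow_lt_of_lt_one (by linarith : (0:ℝ) < 1 - ‖w‖)
    (by norm_num : (1/2:ℝ) < 1)
  have hrep : ((‖w‖:ℝ):ℂ) * Complex.exp ((Complex.arg w :ℂ)*Complex.I) = w := by
    exact Complex.norm_mul_exp_arg_mul_I w
  rw [← hrep]
  exact global_eq hc h0 n ‖w‖ (norm_nonneg w) (by linarith [hn]) (Complex.arg w)

end Chain
/-- For a bounded continuous function `f` on `𝔻`, `‖f‖_BWMO = 0` if and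
only if `f` is constant on `𝔻`. -/
theorem bwmoNorm_eq_zero_iff (f : ℂ → ℂ) (hc : ContinuousOn f unitDisc)
    (hb : ∃ M : ℝ, ∀ z ∈ unitDisc, ‖f z‖ ≤ M) :
    bwmoNorm f = 0 ↔ ∃ c : ℂ, ∀ z ∈ unitDisc, f z = c := by
  have h0d : (0:ℂ) ∈ unitDisc := by show ‖(0:ℂ)‖ < 1; simp
  constructor
  · intro h
    obtain ⟨M, hM⟩ := hb
    have hM0 : 0 ≤ M := (norm_nonneg (f 0)).trans (hM 0 h0d)
    have hbdd : BddAbove {c : ℝ | ∃ z ∈ unitDisc, ∃ ζ ∈ Bz z, c = wQuot f z ζ} := by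
      refine ⟨2*M, ?_⟩
      rintro c ⟨z, hz, ζ, hζ, rfl⟩
      have hz1 : ‖z‖ < 1 := hz
      have hT := dA_Bz_toReal_pos hz
      have hBzK : IsCompact (Bz z) := isCompact_polarRect _ _ _ _
      have hBzzK : IsCompact (Bzz z ζ) := isCompact_polarRect _ _ _ _
      have hBzsub := Bz_subset_unitDisc hz
      have hBzzsub := (Bzz_subset_Bz hz hζ).trans hBzsub
      have hlt : dA (Bz z) < ⊤ := lt_top_iff_ne_top.2 (dA_ne_top hBzK)
      have hmf : MeasureTheory.IntegrableOn f (Bz z) dA := integrableOn_dA hc hBzK hBzsub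
      have havg : ‖avg f z‖ ≤ M := by
        have hnorm : ‖∫ w in Bz z, f w ∂dA‖ ≤ M * (dA (Bz z)).toReal :=
          MeasureTheory.norm_setIntegral_le_of_norm_le_const hlt
            (fun x hx => hM x (hBzsub hx))
        have heq : ‖avg f z‖ = ((dA (Bz z)).toReal)⁻¹ * ‖∫ w in Bz z, f w ∂dA‖ := by
          show ‖((dA (Bz z)).toReal)⁻¹ • ∫ w in Bz z, f w ∂dA‖ = _
          rw [norm_smul, norm_inv, Real.norm_of_nonneg ENNReal.toReal_nonneg]
        rw [heq]
        calc ((dA (Bz z)).toReal)⁻¹ * ‖∫ w in Bz z, f w ∂dA‖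
            ≤ ((dA (Bz z)).toReal)⁻¹ * (M * (dA (Bz z)).toReal) :=
              mul_le_mul_of_nonneg_left hnorm (inv_nonneg.2 ENNReal.toReal_nonneg)
        _ = M := by field_simp
      have hbound : ∀ x ∈ Bzz z ζ, ‖f x - avg f z‖ ≤ 2*M := fun x hx =>
        (norm_sub_le _ _).trans (by linarith [hM x (hBzzsub hx), havg])
      have hkey : ‖∫ ξ in Bzz z ζ, (f ξ - avg f z) ∂dA‖ ≤ 2*M * (dA (Bzz z ζ)).toReal :=
        MeasureTheory.norm_setIntegral_le_of_norm_le_const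
          (lt_top_iff_ne_top.2 (dA_ne_top hBzzK)) hbound
      have hmono : (dA (Bzz z ζ)).toReal ≤ (dA (Bz z)).toReal :=
        ENNReal.toReal_mono (dA_ne_top hBzK) (measure_mono (Bzz_subset_Bz hz hζ))
      show wQuot f z ζ ≤ 2*M
      unfold wQuot
      calc ((dA (Bz z)).toReal)⁻¹ * ‖∫ ξ in Bzz z ζ, (f ξ - avg f z) ∂dA‖
          ≤ ((dA (Bz z)).toReal)⁻¹ * (2*M * (dA (Bz z)).toReal) := by
            apply mul_le_mul_of_nonneg_left _ (inv_nonneg.2 ENNReal.toReal_nonneg)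
            exact hkey.trans (mul_le_mul_of_nonneg_left hmono (by linarith))
      _ = 2*M := by field_simp
    have hS0 : ∀ z ∈ unitDisc, ∀ ζ ∈ Bz z, wQuot f z ζ = 0 := by
      intro z hz ζ hζ
      have hle : wQuot f z ζ ≤ 0 := by
        have hls := le_csSup hbdd (⟨z, hz, ζ, hζ, rfl⟩ :
          wQuot f z ζ ∈ {c : ℝ | ∃ z ∈ unitDisc, ∃ ζ ∈ Bz z, c = wQuot f z ζ})
        unfold bwmoNorm at h
        rw [h] at hls
        exact hls
      have hge : 0 ≤ wQuot f z ζ :=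
        mul_nonneg (inv_nonneg.2 ENNReal.toReal_nonneg) (norm_nonneg _)
      linarith
    exact ⟨f 0, all_const hc hS0⟩
  · rintro ⟨c, hcon⟩
    have hW : ∀ z ∈ unitDisc, ∀ ζ ∈ Bz z, wQuot f z ζ = 0 := by
      intro z hz ζ hζ
      have hT := dA_Bz_toReal_pos hz
      have hBzsub := Bz_subset_unitDisc hz
      have havg : avg f z = c := by
        show ((dA (Bz z)).toReal)⁻¹ • ∫ w in Bz z, f w ∂dA = c
        rw [MeasureTheory.setIntegral_congr_fun
          (measurableSet_Bz z)
          (fun ξ hξ => hcon ξ (hBzsub hξ) : Set.EqOn f (fun _ => c) (Bz z))]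
        rw [MeasureTheory.setIntegral_const, smul_smul, measureReal_def, inv_mul_cancel₀ hT.ne', one_smul]
      unfold wQuot
      rw [havg]
      have hzero : ∫ ξ in Bzz z ζ, (f ξ - c) ∂dA = 0 := by
        have heq : Set.EqOn (fun ξ => f ξ - c) (fun _ => (0:ℂ)) (Bzz z ζ) := fun ξ hξ =>
          sub_eq_zero.2 (hcon ξ (hBzsub (Bzz_subset_Bz hz hζ hξ)))
        rw [MeasureTheory.setIntegral_congr_fun
          (measurableSet_Bzz z ζ) heq]
        simp
      rw [hzero]
      simp
    have hSeq : {c : ℝ | ∃ z ∈ unitDisc, ∃ ζ ∈ Bz z, c = wQuot f z ζ} = {0} := by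
      apply Set.Subset.antisymm
      · rintro x ⟨z, hz, ζ, hζ, rfl⟩
        simp [hW z hz ζ hζ]
      · rintro x hx
        rw [Set.mem_singleton_iff] at hx
        subst hx
        exact ⟨0, h0d, 0, mem_Bz_self h0d, (hW 0 h0d 0 (mem_Bz_self h0d)).symm⟩
    unfold bwmoNorm
    rw [hSeq, csSup_singleton]
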